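/- Let F be the q-power Frobenius acting on P^2 over an algebraic closure of F_q, and let P_1,...,P_5 be five points permuted cyclically by F (i.e. P_{i+1} = F(P_i) indices mod 5, with P_1 not fixed by F). If three of the five points lie on a common line L, then L is defined over F_q and contains all five points. -/

import Mathlib

open Projectivization
open scoped LinearAlgebra.Projectivization

/-- An algebraic closure of the prime field `F_p`. -/
abbrev Kbar (p : ℕ) [Fact p.Prime] := AlgebraicClosure (ZMod p)

/-- The `q = p^n`-power Frobenius ring endomorphism of `\bar F_q`. -/
noncomputable def frobHom (p : ℕ) [Fact p.Prime] (n : ℕ) : Kbar p →+* Kbar p :=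
  (frobenius (Kbar p) p) ^ n

/-- The `q`-power Frobenius as a semilinear map on the vector space `\bar F_q^3`. -/
noncomputable def frobSL (p : ℕ) [Fact p.Prime] (n : ℕ) :
    (Fin 3 → Kbar p) →ₛₗ[frobHom p n] (Fin 3 → Kbar p) where
  toFun v := fun i => frobHom p n (v i)
  map_add' v w := by funext i; simp
  map_smul' c v := by funext i; simp [Pi.smul_apply, smul_eq_mul]


instance (p : ℕ) [Fact p.Prime] (n : ℕ) : RingHomSurjective (frobHom p n) := by
  constructor
  induction n with
  | zero => exact fun x => ⟨x, rfl⟩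
  | succ m ih =>
    have h : frobHom p (m + 1) = (frobHom p m).comp (frobenius (Kbar p) p) := by
      rw [frobHom, pow_succ]
      rfl
    rw [h]
    exact ih.comp (frobeniusEquiv (Kbar p) p).surjective

/-- The `q`-power Frobenius morphism on the projective plane over `\bar F_q`. -/
noncomputable def Frob (p : ℕ) [Fact p.Prime] (n : ℕ) :
    ℙ (Kbar p) (Fin 3 → Kbar p) → ℙ (Kbar p) (Fin 3 → Kbar p) :=
  Projectivization.map (frobSL p n)
    (fun a b hab => by
      funext i
      exact (frobHom p n).injective (congrFun hab i))

open scoped Fin.NatCast Fin.CommRing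

lemma frob_submodule (p : ℕ) [Fact p.Prime] (n : ℕ) (Q : ℙ (Kbar p) (Fin 3 → Kbar p)) :
    (Frob p n Q).submodule = Submodule.map (frobSL p n) Q.submodule := by
  induction Q using Projectivization.ind with
  | h v hv =>
    rw [Frob]
    erw [Projectivization.map_mk]
    rw [Projectivization.submodule_mk,
      Projectivization.submodule_mk, Submodule.map_span, Set.image_singleton]

lemma comb5 : ∀ i j k : Fin 5, i ≠ j → i ≠ k → j ≠ k →
    ∃ d a b : Fin 5, (d = 1 ∨ d = 2) ∧ a ≠ b ∧
      (a = i ∨ a = j ∨ a = k) ∧ (b = i ∨ b = j ∨ b = k) ∧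
      (a + d = i ∨ a + d = j ∨ a + d = k) ∧ (b + d = i ∨ b + d = j ∨ b + d = k) := by
  decide

lemma inv5 : ∀ c : Fin 5, c ≠ 0 → ∃ m : Fin 5, m * c = 1 := by decide

lemma add5 : ∀ x : Fin 5, x + 1 + 1 + 1 + 1 + 1 = x := by decide

lemma two5 : ∀ x : Fin 5, x + 1 + 1 = x + 2 := by decide


/-- If five points of `P^2(\bar F_q)` are permuted cyclically by the `q`-power
Frobenius `F` (so none is `F`-fixed) and three of them lie on a common line `L`, then
`L` is defined over `F_q` (i.e. `F(L) = L`) and contains all five points. -/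
theorem statement3 (p : ℕ) [Fact p.Prime] (n : ℕ) (hn : 0 < n)
    (P : Fin 5 → ℙ (Kbar p) (Fin 3 → Kbar p))
    (hcyc : ∀ i : Fin 5, P (i + 1) = Frob p n (P i))
    (hnf : Frob p n (P 0) ≠ P 0)
    (L : Submodule (Kbar p) (Fin 3 → Kbar p)) (hL : Module.finrank (Kbar p) L = 2)
    (i j k : Fin 5) (hij : i ≠ j) (hik : i ≠ k) (hjk : j ≠ k)
    (hi : (P i).submodule ≤ L) (hj : (P j).submodule ≤ L) (hk : (P k).submodule ≤ L) :
    Submodule.map (frobSL p n) L = L ∧ ∀ m : Fin 5, (P m).submodule ≤ L := by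
  have hC : ∀ c : Fin 5, Submodule.map (frobSL p n) (P c).submodule = (P (c + 1)).submodule :=
    fun c => by rw [hcyc, frob_submodule]
  -- iterates of Frob
  have hiter : ∀ (t : ℕ) (c : Fin 5), P (c + (t : Fin 5)) = (Frob p n)^[t] (P c) := by
    intro t
    induction t with
    | zero => intro c; simp
    | succ s ih =>
      intro c
      have h1 : ((s + 1 : ℕ) : Fin 5) = (s : Fin 5) + 1 := by push_cast; ring
      rw [h1, ← add_assoc, hcyc, ih, Function.iterate_succ_apply']
  -- P is injective
  have hPinj : Function.Injective P := by
    intro a b hab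
    by_contra hne
    have hc0 : b - a ≠ 0 := sub_ne_zero.mpr (Ne.symm hne)
    have hshiftF : ∀ t : Fin 5, P (a + t) = P (b + t) := by
      intro t
      rw [← Fin.cast_val_eq_self t, hiter, hiter, hab]
    have hshift : ∀ x : Fin 5, P (x + (b - a)) = P x := by
      intro x
      have e1 : x + (b - a) = b + (x - a) := by ring
      have e2 : a + (x - a) = x := by ring
      rw [e1, ← hshiftF (x - a), e2]
    have hrep : ∀ (s : ℕ) (x : Fin 5), P (x + (s : Fin 5) * (b - a)) = P x := by
      intro s
      induction s with
      | zero => intro x; simp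
      | succ s ih =>
        intro x
        have e : x + ((s + 1 : ℕ) : Fin 5) * (b - a)
            = (x + (b - a)) + (s : Fin 5) * (b - a) := by push_cast; ring
        rw [e, ih, hshift]
    obtain ⟨m, hm⟩ := inv5 (b - a) hc0
    have h10 : P 1 = P 0 := by
      have := hrep m.val 0
      rw [Fin.cast_val_eq_self m, hm, zero_add] at this
      exact this
    apply hnf
    rw [← hcyc 0]
    have : (0 : Fin 5) + 1 = 1 := by decide
    rw [this, h10]
  -- two distinct points in L span L
  have hsup : ∀ a b : Fin 5, a ≠ b → (P a).submodule ≤ L → (P b).submodule ≤ L →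
      (P a).submodule ⊔ (P b).submodule = L := by
    intro a b hab ha hb
    have hnesub : (P a).submodule ≠ (P b).submodule :=
      fun h => hab (hPinj (Projectivization.submodule_injective h))
    have hinf : (P a).submodule ⊓ (P b).submodule = ⊥ := by
      by_contra hbot
      have h0 : Module.finrank (Kbar p) ((P a).submodule ⊓ (P b).submodule : Submodule (Kbar p) (Fin 3 → Kbar p)) ≠ 0 := by
        exact fun h0' => hbot (Submodule.finrank_eq_zero.mp h0')
      have hle1 : Module.finrank (Kbar p) ((P a).submodule) ≤
          Module.finrank (Kbar p) ((P a).submodule ⊓ (P b).submodule : Submodule (Kbar p) (Fin 3 → Kbar p)) := by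
        rw [Projectivization.finrank_submodule]
        omega
      have hea := Submodule.eq_of_le_of_finrank_le inf_le_left hle1
      have hle2 : Module.finrank (Kbar p) ((P b).submodule) ≤
          Module.finrank (Kbar p) ((P a).submodule ⊓ (P b).submodule : Submodule (Kbar p) (Fin 3 → Kbar p)) := by
        rw [Projectivization.finrank_submodule]
        omega
      have heb := Submodule.eq_of_le_of_finrank_le inf_le_right hle2
      exact hnesub (hea.symm.trans heb)
    have hfr : Module.finrank (Kbar p)
        ((P a).submodule ⊔ (P b).submodule : Submodule (Kbar p) (Fin 3 → Kbar p)) = 2 := by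
      have := Submodule.finrank_sup_add_finrank_inf_eq (P a).submodule (P b).submodule
      rw [hinf, Projectivization.finrank_submodule, Projectivization.finrank_submodule,
        finrank_bot] at this
      omega
    exact Submodule.eq_of_le_of_finrank_le (sup_le ha hb) (by rw [hL, hfr])
  obtain ⟨d, a, b, hd, hab, ha, hb, had, hbd⟩ := comb5 i j k hij hik hjk
  have hmem : ∀ x : Fin 5, (x = i ∨ x = j ∨ x = k) → (P x).submodule ≤ L := by
    rintro x (rfl | rfl | rfl) <;> assumption
  have hLab : (P a).submodule ⊔ (P b).submodule = L := hsup a b hab (hmem a ha) (hmem b hb)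
  have habd : a + d ≠ b + d := fun h => hab (by
    have := add_right_cancel h; exact this)
  have hLab' : (P (a + d)).submodule ⊔ (P (b + d)).submodule = L :=
    hsup _ _ habd (hmem _ had) (hmem _ hbd)
  have hstep : ∀ x y : Fin 5,
      Submodule.map (frobSL p n) ((P x).submodule ⊔ (P y).submodule)
        = (P (x + 1)).submodule ⊔ (P (y + 1)).submodule := by
    intro x y
    rw [Submodule.map_sup, hC, hC]
  have hmapL : Submodule.map (frobSL p n) L = L := by
    rcases hd with rfl | rfl
    · conv_lhs => rw [← hLab]
      rw [hstep]
      exact hLab'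
    · have h2 : Submodule.map (frobSL p n) (Submodule.map (frobSL p n) L) = L := by
        conv_lhs => rw [← hLab]
        rw [hstep, hstep, two5, two5]
        exact hLab'
      have h4 : Submodule.map (frobSL p n) (Submodule.map (frobSL p n)
          (Submodule.map (frobSL p n) (Submodule.map (frobSL p n) L))) = L := by
        rw [h2, h2]
      have h5 : Submodule.map (frobSL p n) (Submodule.map (frobSL p n)
          (Submodule.map (frobSL p n) (Submodule.map (frobSL p n)
          (Submodule.map (frobSL p n) L)))) = L := by
        conv_lhs => rw [← hLab]
        rw [hstep, hstep, hstep, hstep, hstep, add5, add5]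
        exact hLab
      calc Submodule.map (frobSL p n) L
          = Submodule.map (frobSL p n) (Submodule.map (frobSL p n)
            (Submodule.map (frobSL p n) (Submodule.map (frobSL p n)
            (Submodule.map (frobSL p n) L)))) := by rw [h4]
        _ = L := h5
  refine ⟨hmapL, fun m => ?_⟩
  have hone : ∀ x : Fin 5, (P x).submodule ≤ L → (P (x + 1)).submodule ≤ L := by
    intro x hx
    rw [← hC x, ← hmapL]
    exact Submodule.map_mono hx
  have hallnat : ∀ t : ℕ, (P (a + (t : Fin 5))).submodule ≤ L := by
    intro t
    induction t with
    | zero => simpa using hmem a ha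
    | succ s ih =>
      have h1 : ((s + 1 : ℕ) : Fin 5) = (s : Fin 5) + 1 := by push_cast; ring
      rw [h1, ← add_assoc]
      exact hone _ ih
  have hm : m = a + ((m - a).val : Fin 5) := by rw [Fin.cast_val_eq_self]; ring
  rw [hm]
  exact hallnat (m - a).val
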